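/- arXiv:1407.8380 — 2 statements merged into one kernel-verified Lean document; each statement's English description precedes it below -/
import Mathlib

section
/- If the system ẋ = f(x,u) is semi-globally asymptotically stabilizable by sampled-data feedback (SDF-SGAS), then it is weakly globally asymptotically stabilizable by sampled-data feedback (SDF-WGAS). -/
open MeasureTheory Filter Set

noncomputable section

/-- `Euc n` is the Euclidean state space `ℝⁿ`. -/
abbrev Euc (n : ℕ) : Type := EuclideanSpace ℝ (Fin n)

/-- A control is admissible if it is measurable and locally essentially bounded. -/
def AdmissibleControl {U : Type*} [NormedAddCommGroup U] [MeasurableSpace U]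
    (u : ℝ → U) : Prop :=
  Measurable u ∧ ∀ T : ℝ, ∃ C : ℝ, ∀ᵐ t ∂(volume.restrict (Icc (-T) T)), ‖u t‖ ≤ C

/-- `x` is a (Carathéodory) solution of `ẋ = f(x, u(t))` with `x s = x₀`, on `[s, b]`. -/
def IsSolOn {n : ℕ} {U : Type*} (f : Euc n → U → Euc n) (u : ℝ → U) (s : ℝ)
    (x₀ : Euc n) (x : ℝ → Euc n) (b : ℝ) : Prop :=
  ∀ t ∈ Icc s b, x t = x₀ + ∫ τ in s..t, f (x τ) (u τ)

/-- `x` is a (Carathéodory) solution of `ẋ = f(x, u(t))` with `x s = x₀`, on `[s, ∞)`. -/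
def IsSolGlobal {n : ℕ} {U : Type*} (f : Euc n → U → Euc n) (u : ℝ → U) (s : ℝ)
    (x₀ : Euc n) (x : ℝ → Euc n) : Prop :=
  ∀ t, s ≤ t → x t = x₀ + ∫ τ in s..t, f (x τ) (u τ)

/-- Weak global asymptotic stabilizability by (time-varying) sampled-data feedback. -/
def SDF_WGAS {n : ℕ} {U : Type*} [NormedAddCommGroup U] [MeasurableSpace U]
    (f : Euc n → U → Euc n) : Prop :=
  ∀ τ : ℝ, 0 < τ →
    ∃ (T : Euc n → ℝ) (k : ℝ → Euc n → Euc n → U),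
      (∀ x : Euc n, x ≠ 0 → 0 < T x ∧ T x ≤ τ) ∧
      (∀ x x₀ : Euc n, AdmissibleControl (fun t => k t x x₀)) ∧
      ∃ (traj : Euc n → ℝ → Euc n) (ts : Euc n → ℕ → ℝ),
        (∀ x₀ : Euc n, x₀ ≠ 0 →
          ts x₀ 0 = 0 ∧ StrictMono (ts x₀) ∧ Tendsto (ts x₀) atTop atTop ∧
          traj x₀ 0 = x₀ ∧
          (∀ i : ℕ, ts x₀ (i + 1) - ts x₀ i = T (traj x₀ (ts x₀ i))) ∧
          (∀ i : ℕ, ∀ t ∈ Ico (ts x₀ i) (ts x₀ (i + 1)),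
            traj x₀ t = traj x₀ (ts x₀ i) +
              ∫ τ' in (ts x₀ i)..t, f (traj x₀ τ') (k τ' (traj x₀ (ts x₀ i)) x₀)) ∧
          Tendsto (traj x₀) atTop (nhds 0)) ∧
        (∀ ε : ℝ, 0 < ε → ∃ δ : ℝ, 0 < δ ∧
          ∀ x₀ : Euc n, x₀ ≠ 0 → ‖x₀‖ ≤ δ → ∀ t : ℝ, 0 ≤ t → ‖traj x₀ t‖ ≤ ε)

/-- Semi-global asymptotic stabilizability by sampled-data feedback. -/
def SDF_SGAS {n : ℕ} {U : Type*} [NormedAddCommGroup U] [MeasurableSpace U]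
    (f : Euc n → U → Euc n) : Prop :=
  ∀ R : ℝ, 0 < R → ∀ Ts : ℕ → ℝ, Ts 0 = 0 → StrictMono Ts → Tendsto Ts atTop atTop →
    ∃ (P : Set (Euc n)) (k : ℝ → Euc n → U),
      P ∈ nhds (0 : Euc n) ∧ Metric.closedBall (0 : Euc n) R ⊆ P ∧
      (∀ x : Euc n, AdmissibleControl (fun t => k t x)) ∧
      ∃ traj : Euc n → ℝ → Euc n,
        (∀ x₀ ∈ P, traj x₀ 0 = x₀ ∧
          (∀ i : ℕ, ∀ t ∈ Ico (Ts i) (Ts (i + 1)),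
            traj x₀ t = traj x₀ (Ts i) +
              ∫ τ' in (Ts i)..t, f (traj x₀ τ') (k τ' (traj x₀ (Ts i)))) ∧
          Tendsto (traj x₀) atTop (nhds 0)) ∧
        (∀ ε : ℝ, 0 < ε → ∃ δ : ℝ, 0 < δ ∧
          ∀ x₀ ∈ P, ‖x₀‖ ≤ δ → ∀ t : ℝ, 0 ≤ t → ‖traj x₀ t‖ ≤ ε)

/-- SDF-SGAS implies SDF-WGAS. -/
theorem stmt4 {n m : ℕ} (f : Euc n → Euc m → Euc n)
    (hLip : ∃ K : NNReal, LipschitzWith K (Function.uncurry f))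
    (hf0 : f 0 0 = 0)
    (hSGAS : SDF_SGAS f) :
    SDF_WGAS f := by
  intro τ hτ
  -- fixed uniform partition with step τ
  set Ts : ℕ → ℝ := fun i => (i : ℝ) * τ with hTsdef
  have hTs0 : Ts 0 = 0 := by simp [Ts]
  have hmono : StrictMono Ts := by
    intro a b hab
    exact mul_lt_mul_of_pos_right (by exact_mod_cast hab) hτ
  have htop : Tendsto Ts atTop atTop :=
    (tendsto_natCast_atTop_atTop : Tendsto (fun i : ℕ => (i : ℝ)) atTop atTop).atTop_mul_const hτ
  have key : ∀ r : ℝ, ∃ (P : Set (Euc n)) (k : ℝ → Euc n → Euc m),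
      P ∈ nhds (0 : Euc n) ∧ Metric.closedBall (0 : Euc n) (max r 1) ⊆ P ∧
      (∀ x : Euc n, AdmissibleControl (fun t => k t x)) ∧
      ∃ traj : Euc n → ℝ → Euc n,
        (∀ x₀ ∈ P, traj x₀ 0 = x₀ ∧
          (∀ i : ℕ, ∀ t ∈ Ico (Ts i) (Ts (i + 1)),
            traj x₀ t = traj x₀ (Ts i) +
              ∫ τ' in (Ts i)..t, f (traj x₀ τ') (k τ' (traj x₀ (Ts i)))) ∧
          Tendsto (traj x₀) atTop (nhds 0)) ∧
        (∀ ε : ℝ, 0 < ε → ∃ δ : ℝ, 0 < δ ∧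
          ∀ x₀ ∈ P, ‖x₀‖ ≤ δ → ∀ t : ℝ, 0 ≤ t → ‖traj x₀ t‖ ≤ ε) :=
    fun r => hSGAS (max r 1) (lt_of_lt_of_le one_pos (le_max_right r 1)) Ts hTs0 hmono htop
  choose P k hP hball hadm traj htraj hstab using key
  refine ⟨fun _ => τ, fun t x x₀ => k (max ‖x₀‖ 1) t x,
    fun x _ => ⟨hτ, le_refl τ⟩,
    fun x x₀ => hadm (max ‖x₀‖ 1) x,
    fun x₀ t => traj (max ‖x₀‖ 1) x₀ t,
    fun _ i => Ts i, ?_, ?_⟩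
  · intro x₀ hx₀
    have hmem : x₀ ∈ P (max ‖x₀‖ 1) := by
      apply hball
      simp only [Metric.mem_closedBall, dist_zero_right]
      exact le_trans (le_max_left _ _) (le_max_left _ _)
    obtain ⟨h0, heq, hlim⟩ := htraj (max ‖x₀‖ 1) x₀ hmem
    refine ⟨hTs0, hmono, htop, h0, ?_, heq, hlim⟩
    intro i
    simp only [Ts]
    push_cast
    ring
  · intro ε hε
    obtain ⟨δ, hδ, hst⟩ := hstab 1 ε hε
    refine ⟨min δ 1, lt_min hδ one_pos, ?_⟩
    intro x₀ _ hx₀ t ht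
    have h1 : ‖x₀‖ ≤ 1 := le_trans hx₀ (min_le_right _ _)
    have hm : max ‖x₀‖ 1 = (1 : ℝ) := max_eq_right h1
    have hmem : x₀ ∈ P 1 := by
      apply hball
      simp only [Metric.mem_closedBall, dist_zero_right]
      exact le_trans h1 (le_max_left _ _)
    show ‖traj (max ‖x₀‖ 1) x₀ t‖ ≤ ε
    rw [hm]
    exact hst x₀ hmem (le_trans hx₀ (min_le_left _ _)) t ht
end
end

section
/- Consider the three-dimensional system with f(x)=(x₂α(x₃),−x₁β(x₃),0)ᵀ, g(x)=(0,0,1)ᵀ, where α,β∈C²(ℝ,ℝ) satisfy α(0)=β(0)≠0 and α′(0)≠β′(0), and let V(x)=½(x₁²+x₂²+x₃²). Then for every x≠0 with x₃=0: (gV)(x)=0, (fV)(x)=0, (f²V)(x)=0 and (f³V)(x)=0; moreover, if ([f,g]V)(x)=0 then ([[g,f],f]V)(x)≠0. -/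
open MeasureTheory Filter Set

noncomputable section

/-- Vector fields on `ℝⁿ`. -/
abbrev VF (n : ℕ) : Type := Euc n → Euc n

/-- `(XV)(x) := DV(x)·X(x)`, the derivative of `V` along the vector field `X`. -/
def vfD {n : ℕ} (X : VF n) (V : Euc n → ℝ) : Euc n → ℝ := fun x => fderiv ℝ V x (X x)

/-- Lie bracket `[X,Y] := (DY)X − (DX)Y`. -/
def lieB {n : ℕ} (X Y : VF n) : VF n := fun x => fderiv ℝ Y x (X x) - fderiv ℝ X x (Y x)

/-- `iterD X V i = XⁱV`, with `X⁰V = V` and `X^{i+1}V = X(XⁱV)`. -/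
def iterD {n : ℕ} (X : VF n) (V : Euc n → ℝ) : ℕ → (Euc n → ℝ)
  | 0 => V
  | i + 1 => vfD X (iterD X V i)

/-- `applyVFs [Δ₁, …, Δ_k] V = Δ₁Δ₂⋯Δ_kV`. -/
def applyVFs {n : ℕ} : List (VF n) → (Euc n → ℝ) → (Euc n → ℝ)
  | [], V => V
  | X :: L, V => vfD X (applyVFs L V)

/-- `adIter X Y N = [[…[[X,Y],Y],…,Y],Y]` (`N` iterated brackets with `Y`). -/
def adIter {n : ℕ} (X Y : VF n) : ℕ → VF n
  | 0 => X
  | k + 1 => lieB (adIter X Y k) Y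

/-- `Lk f g i` is the subspace `L_{i+1}` of the paper:
`L₁ = span{f,g}` and `L_{i+1} = span{[X,Y] : X ∈ L_i, Y ∈ L₁}`. -/
def Lk {n : ℕ} (f g : VF n) : ℕ → Submodule ℝ (VF n)
  | 0 => Submodule.span ℝ {f, g}
  | i + 1 => Submodule.span ℝ
      {Z : VF n | ∃ X ∈ Lk f g i, ∃ Y ∈ Submodule.span ℝ ({f, g} : Set (VF n)), Z = lieB X Y}

/-- The Lie algebra generated by `{f, g}` (the span of all the `L_i`). -/
def LieGen {n : ℕ} (f g : VF n) : Submodule ℝ (VF n) := ⨆ i : ℕ, Lk f g i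

/-- `hasOrder f g Δ k` : `Δ` has order `k` with respect to `{f,g}`:
order `1` iff `Δ ∈ L₁ \ {0}`; order `k > 1` iff `Δ = Δ₁ + Δ₂` with
`Δ₁ ∈ L_k \ {0}` and `Δ₂ ∈ span{∪_{i=1}^{k-1} L_i}`. -/
def hasOrder {n : ℕ} (f g : VF n) (Δ : VF n) : ℕ → Prop
  | 0 => False
  | 1 => Δ ∈ Lk f g 0 ∧ Δ ≠ 0
  | k + 2 => ∃ Δ₁ Δ₂ : VF n, Δ₁ ∈ Lk f g (k + 1) ∧ Δ₁ ≠ 0 ∧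
      Δ₂ ∈ (⨆ i ∈ Finset.range (k + 1), Lk f g i) ∧ Δ = Δ₁ + Δ₂

/-- `(Δ₁Δ₂⋯Δ_kV)(x) = 0` for all `Δ₁,…,Δ_k ∈ Lie{f,g} ∖ {g}` with
`Σ_p order_{{f,g}} Δ_p ≤ N`. -/
def LieCondZero {n : ℕ} (f g : VF n) (V : Euc n → ℝ) (x : Euc n) (N : ℕ) : Prop :=
  ∀ (Δs : List (VF n)) (os : List ℕ), Δs ≠ [] → Δs.length = os.length →
    (∀ p ∈ List.zip Δs os, p.1 ∈ LieGen f g ∧ p.1 ≠ g ∧ hasOrder f g p.1 p.2) →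
    os.sum ≤ N → applyVFs Δs V x = 0

/-- The drift vector field `f(x) = (x₂α(x₃), −x₁β(x₃), 0)ᵀ` of the 3D example. -/
def exF (α β : ℝ → ℝ) : VF 3 :=
  fun x => (EuclideanSpace.equiv (Fin 3) ℝ).symm ![x 1 * α (x 2), -(x 0 * β (x 2)), 0]

/-- The control vector field `g(x) = (0, 0, 1)ᵀ` of the 3D example. -/
def exG : VF 3 := fun _ => (EuclideanSpace.equiv (Fin 3) ℝ).symm ![0, 0, 1]

/-- The Lyapunov function `V(x) = ½(x₁² + x₂² + x₃²)`. -/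
def exV : Euc 3 → ℝ := fun x => (1 / 2) * (x 0 ^ 2 + x 1 ^ 2 + x 2 ^ 2)

def pr (i : Fin 3) : Euc 3 →L[ℝ] ℝ := EuclideanSpace.proj i

lemma hpr (i : Fin 3) (x : Euc 3) : HasFDerivAt (fun y : Euc 3 => y i) (pr i) x :=
  (pr i).hasFDerivAt

@[simp] lemma pr_apply (i : Fin 3) (v : Euc 3) : pr i v = v i := rfl

lemma hcomp {a : ℝ → ℝ} (ha : ContDiff ℝ 1 a) (x : Euc 3) :
    HasFDerivAt (fun y : Euc 3 => a (y 2)) (deriv a (x 2) • pr 2) x :=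
  ((ha.differentiable one_ne_zero) (x 2)).hasDerivAt.comp_hasFDerivAt x (hpr 2 x)

lemma fderiv_exV_apply (x v : Euc 3) :
    fderiv ℝ exV x v = x 0 * v 0 + x 1 * v 1 + x 2 * v 2 := by
  have he : exV = fun y : Euc 3 => (1/2 : ℝ) * (y 0 * y 0 + y 1 * y 1 + y 2 * y 2) := by
    funext y; simp [exV]; ring
  rw [he]
  have h := ((((hpr 0 x).fun_mul (hpr 0 x)).fun_add ((hpr 1 x).fun_mul (hpr 1 x))).fun_add
      ((hpr 2 x).fun_mul (hpr 2 x))).const_mul (1/2 : ℝ)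
  rw [h.fderiv]
  simp
  ring

@[simp] lemma esymm_apply (y : Fin 3 → ℝ) (i : Fin 3) :
    (EuclideanSpace.equiv (Fin 3) ℝ).symm y i = y i := rfl

lemma hasFDerivAt_exF {a b : ℝ → ℝ} (ha : ContDiff ℝ 1 a) (hb : ContDiff ℝ 1 b) (x : Euc 3) :
    HasFDerivAt (exF a b)
      ((EuclideanSpace.equiv (Fin 3) ℝ).symm.toContinuousLinearMap.comp
        (ContinuousLinearMap.pi ![
          x 1 • (deriv a (x 2) • pr 2) + a (x 2) • pr 1,
          -(x 0 • (deriv b (x 2) • pr 2) + b (x 2) • pr 0),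
          0])) x := by
  have hF : HasFDerivAt (fun y : Euc 3 => (![y 1 * a (y 2), -(y 0 * b (y 2)), 0] : Fin 3 → ℝ))
      (ContinuousLinearMap.pi ![
          x 1 • (deriv a (x 2) • pr 2) + a (x 2) • pr 1,
          -(x 0 • (deriv b (x 2) • pr 2) + b (x 2) • pr 0),
          0]) x := by
    apply hasFDerivAt_pi'.2
    intro i
    fin_cases i
    · simpa [ContinuousLinearMap.proj_pi] using ((hpr 1 x).fun_mul (hcomp ha x))
    · simpa [ContinuousLinearMap.proj_pi] using ((hpr 0 x).fun_mul (hcomp hb x)).fun_neg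
    · simpa [ContinuousLinearMap.proj_pi] using (hasFDerivAt_const (0:ℝ) x)
  exact ((EuclideanSpace.equiv (Fin 3) ℝ).symm.toContinuousLinearMap.hasFDerivAt).comp x hF

lemma fderiv_exF_apply {a b : ℝ → ℝ} (ha : ContDiff ℝ 1 a) (hb : ContDiff ℝ 1 b) (x v : Euc 3) :
    fderiv ℝ (exF a b) x v = (EuclideanSpace.equiv (Fin 3) ℝ).symm
      ![v 1 * a (x 2) + x 1 * (deriv a (x 2) * v 2),
        -(v 0 * b (x 2) + x 0 * (deriv b (x 2) * v 2)), 0] := by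
  rw [(hasFDerivAt_exF ha hb x).fderiv]
  apply PiLp.ext
  intro i
  fin_cases i <;>
    simp [ContinuousLinearMap.pi_apply] <;> ring

def W1 (a b : ℝ → ℝ) : Euc 3 → ℝ := fun y => y 0 * y 1 * (a (y 2) - b (y 2))
def W2 (a b : ℝ → ℝ) : Euc 3 → ℝ :=
  fun y => (a (y 2) - b (y 2)) * (y 1 * y 1 * a (y 2) - y 0 * y 0 * b (y 2))

lemma fderiv_W1_apply {a b : ℝ → ℝ} (ha : ContDiff ℝ 1 a) (hb : ContDiff ℝ 1 b) (x v : Euc 3) :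
    fderiv ℝ (W1 a b) x v =
      v 0 * x 1 * (a (x 2) - b (x 2)) + x 0 * v 1 * (a (x 2) - b (x 2)) +
        x 0 * x 1 * ((deriv a (x 2) - deriv b (x 2)) * v 2) := by
  have h := ((hpr 0 x).fun_mul (hpr 1 x)).fun_mul ((hcomp ha x).fun_sub (hcomp hb x))
  rw [show W1 a b = fun y : Euc 3 => y 0 * y 1 * (a (y 2) - b (y 2)) from rfl, h.fderiv]
  simp
  ring

lemma fderiv_W2_apply {a b : ℝ → ℝ} (ha : ContDiff ℝ 1 a) (hb : ContDiff ℝ 1 b) (x v : Euc 3) :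
    fderiv ℝ (W2 a b) x v =
      (deriv a (x 2) - deriv b (x 2)) * v 2 * (x 1 * x 1 * a (x 2) - x 0 * x 0 * b (x 2)) +
        (a (x 2) - b (x 2)) * (2 * x 1 * v 1 * a (x 2) + x 1 * x 1 * (deriv a (x 2) * v 2)
          - (2 * x 0 * v 0 * b (x 2) + x 0 * x 0 * (deriv b (x 2) * v 2))) := by
  have h := ((hcomp ha x).fun_sub (hcomp hb x)).fun_mul
      ((((hpr 1 x).fun_mul (hpr 1 x)).fun_mul (hcomp ha x)).fun_sub
        (((hpr 0 x).fun_mul (hpr 0 x)).fun_mul (hcomp hb x)))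
  rw [show W2 a b = fun y : Euc 3 => (a (y 2) - b (y 2)) * (y 1 * y 1 * a (y 2) - y 0 * y 0 * b (y 2)) from rfl, h.fderiv]
  simp
  ring


lemma vfD_exF_exV {a b : ℝ → ℝ} (ha : ContDiff ℝ 1 a) (hb : ContDiff ℝ 1 b) :
    vfD (exF a b) exV = W1 a b := by
  funext y
  simp only [vfD, fderiv_exV_apply, W1, exF, esymm_apply]
  simp
  ring

lemma vfD_exF_W1 {a b : ℝ → ℝ} (ha : ContDiff ℝ 1 a) (hb : ContDiff ℝ 1 b) :
    vfD (exF a b) (W1 a b) = W2 a b := by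
  funext y
  simp only [vfD, fderiv_W1_apply ha hb, W2, exF, esymm_apply,
    Matrix.cons_val_zero, Matrix.cons_val_one, Matrix.head_cons, Matrix.cons_val_two,
    Matrix.tail_cons]
  ring

lemma fderiv_exG (x : Euc 3) : fderiv ℝ exG x = 0 := by
  exact fderiv_const_apply _

lemma lieB_exG_exF {a b : ℝ → ℝ} (ha : ContDiff ℝ 1 a) (hb : ContDiff ℝ 1 b) :
    lieB exG (exF a b) = exF (deriv a) (deriv b) := by
  funext y
  simp only [lieB, fderiv_exG, fderiv_exF_apply ha hb]
  apply PiLp.ext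
  intro i
  fin_cases i <;> simp [exG, exF]

/-- For the 3D example, at every `x ≠ 0` with `x₃ = 0`:
`(gV)(x) = (fV)(x) = (f²V)(x) = (f³V)(x) = 0`, and if `([f,g]V)(x) = 0` then
`([[g,f],f]V)(x) ≠ 0`. -/
theorem stmt17 (α β : ℝ → ℝ) (hα : ContDiff ℝ 2 α) (hβ : ContDiff ℝ 2 β)
    (hab : α 0 = β 0) (ha0 : α 0 ≠ 0) (hd : deriv α 0 ≠ deriv β 0) :
    ∀ x : Euc 3, x ≠ 0 → x 2 = 0 →
      vfD exG exV x = 0 ∧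
      iterD (exF α β) exV 1 x = 0 ∧
      iterD (exF α β) exV 2 x = 0 ∧
      iterD (exF α β) exV 3 x = 0 ∧
      (vfD (lieB (exF α β) exG) exV x = 0 →
        vfD (lieB (lieB exG (exF α β)) (exF α β)) exV x ≠ 0) := by
  have hα1 : ContDiff ℝ 1 α := hα.of_le (by norm_num)
  have hβ1 : ContDiff ℝ 1 β := hβ.of_le (by norm_num)
  have hα' : ContDiff ℝ 1 (deriv α) := by
    have h := contDiff_succ_iff_deriv (𝕜 := ℝ) (f := α) (n := 1)
    rw [show ((1 : WithTop ℕ∞) + 1) = 2 from by norm_num] at h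
    exact (h.mp hα).2.2
  have hβ' : ContDiff ℝ 1 (deriv β) := by
    have h := contDiff_succ_iff_deriv (𝕜 := ℝ) (f := β) (n := 1)
    rw [show ((1 : WithTop ℕ∞) + 1) = 2 from by norm_num] at h
    exact (h.mp hβ).2.2
  intro x hx hx2
  refine ⟨?_, ?_, ?_, ?_, ?_⟩
  · simp [vfD, fderiv_exV_apply, exG, hx2]
  · show vfD (exF α β) exV x = 0
    rw [vfD_exF_exV hα1 hβ1]
    simp [W1, hx2, hab]
  · show vfD (exF α β) (vfD (exF α β) exV) x = 0
    rw [vfD_exF_exV hα1 hβ1, vfD_exF_W1 hα1 hβ1]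
    simp [W2, hx2, hab]
  · show vfD (exF α β) (vfD (exF α β) (vfD (exF α β) exV)) x = 0
    rw [vfD_exF_exV hα1 hβ1, vfD_exF_W1 hα1 hβ1]
    simp only [vfD, fderiv_W2_apply hα1 hβ1]
    simp [exF, hx2, hab]
  · intro hz
    have hzv : vfD (lieB (exF α β) exG) exV x = x 0 * x 1 * (deriv β 0 - deriv α 0) := by
      simp only [vfD, lieB, fderiv_exG, fderiv_exF_apply hα1 hβ1, fderiv_exV_apply]
      simp [exG, exF, hx2]
      ring
    have hc : deriv β 0 - deriv α 0 ≠ 0 := sub_ne_zero.mpr (Ne.symm hd)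
    have hz01 : x 0 * x 1 = 0 := by
      rw [hzv] at hz
      rcases mul_eq_zero.mp hz with h | h
      · exact h
      · exact absurd h hc
    have hx01 : x 0 ≠ 0 ∨ x 1 ≠ 0 := by
      by_contra h
      push_neg at h
      apply hx
      apply PiLp.ext
      intro i
      fin_cases i <;> simp [h.1, h.2, hx2]
    rw [lieB_exG_exF hα1 hβ1]
    have key : vfD (lieB (exF (deriv α) (deriv β)) (exF α β)) exV x
        = α 0 * (deriv α 0 - deriv β 0) * (x 0 * x 0 - x 1 * x 1) := by
      simp only [vfD, lieB, fderiv_exF_apply hα1 hβ1, fderiv_exF_apply hα' hβ',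
        fderiv_exV_apply]
      simp [exF, hx2, hab]
      ring
    rw [key]
    refine mul_ne_zero (mul_ne_zero ha0 (sub_ne_zero.mpr hd)) ?_
    intro hcon
    rcases mul_eq_zero.mp hz01 with h | h
    · have h' : x 1 ≠ 0 := hx01.resolve_left (not_not_intro h)
      have hq : x 1 * x 1 = 0 := by rw [h] at hcon; linarith
      exact h' (mul_self_eq_zero.mp hq)
    · have h' : x 0 ≠ 0 := hx01.resolve_right (not_not_intro h)
      have hq : x 0 * x 0 = 0 := by rw [h] at hcon; linarith
      exact h' (mul_self_eq_zero.mp hq)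
end
end
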